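/- For any feasible instance of Graph Inspection (an undirected graph G with nonnegative edge weights, a coloring function assigning each vertex a set of colors, a start vertex s, and a target number t of colors), there exists an optimal solution walk (a minimum-weight closed walk from s collecting at least t colors) that does not repeat any directed edge; i.e., no ordered pair (u,v) appears twice as consecutive vertices in the walk. -/

import Mathlib

/-- Weight of a walk given as a list of vertices: sum of weights of consecutive pairs. -/
def walkWeight {V : Type*} (w : V → V → ℝ) : List V → ℝ
  | [] => 0
  | [_] => 0
  | a :: b :: rest => w a b + walkWeight w (b :: rest)

/-- The set of colors collected by a walk. -/
def collected {V C : Type*} [DecidableEq C] (col : V → Finset C) (p : List V) : Finset C :=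
  p.foldr (fun v acc => col v ∪ acc) ∅

/-- A closed walk starting and ending at `s`, with consecutive vertices adjacent. -/
def IsClosedWalkFrom {V : Type*} (Adj : V → V → Prop) (s : V) (p : List V) : Prop :=
  p ≠ [] ∧ p.head? = some s ∧ p.getLast? = some s ∧ p.Chain' Adj

/-- A solution to Graph Inspection: a closed walk from `s` collecting at least `t` colors. -/
def IsSolution {V C : Type*} [DecidableEq C] (Adj : V → V → Prop)
    (col : V → Finset C) (s : V) (t : ℕ) (p : List V) : Prop :=
  IsClosedWalkFrom Adj s p ∧ t ≤ (collected col p).card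

section helpers
variable {V C : Type*}

lemma walkWeight_append_cons (w : V → V → ℝ) (a : V) (l2 : List V) :
    ∀ l1, walkWeight w (l1 ++ a :: l2) = walkWeight w (l1 ++ [a]) + walkWeight w (a :: l2)
  | [] => by simp [walkWeight]
  | [x] => by cases l2 <;> simp [walkWeight] <;> ring
  | x :: y :: l1 => by
    have ih := walkWeight_append_cons w a l2 (y :: l1)
    simp only [List.cons_append, walkWeight, List.append_eq] at ih ⊢
    rw [ih]; ring

lemma walkWeight_concat (w : V → V → ℝ) (hwsymm : ∀ u v, w u v = w v u) (a : V) :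
    ∀ l, walkWeight w (l ++ [a]) = walkWeight w (a :: l.reverse)
  | [] => by simp [walkWeight]
  | [x] => by simp [walkWeight, hwsymm x a]
  | x :: y :: l => by
    have ih := walkWeight_concat w hwsymm a (y :: l)
    have h2 := walkWeight_append_cons w y [x] (a :: l.reverse)
    have e2 : a :: (x :: y :: l).reverse = (a :: l.reverse) ++ y :: [x] := by simp
    rw [e2, h2]
    have e3 : (a :: l.reverse) ++ [y] = a :: (y :: l).reverse := by simp
    rw [e3, ← ih]
    simp only [List.cons_append, walkWeight, List.append_eq]
    rw [hwsymm x y]; ring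

lemma walkWeight_reverse (w : V → V → ℝ) (hwsymm : ∀ u v, w u v = w v u) :
    ∀ l : List V, walkWeight w l.reverse = walkWeight w l
  | [] => rfl
  | a :: l => by
    rw [List.reverse_cons, walkWeight_concat w hwsymm a, List.reverse_reverse]

lemma mem_collected [DecidableEq C] (col : V → Finset C) (x : C) :
    ∀ p : List V, x ∈ collected col p ↔ ∃ v ∈ p, x ∈ col v
  | [] => by simp [collected]
  | a :: p => by
    have ih := mem_collected col x p
    have h : collected col (a :: p) = col a ∪ collected col p := rfl
    simp [h, ih]

lemma surgeryA [DecidableEq C] {Adj : V → V → Prop} (hsymm : Symmetric Adj)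
    (w : V → V → ℝ) (hw : ∀ u v, 0 ≤ w u v) (hwsymm : ∀ u v, w u v = w v u)
    (col : V → Finset C) (s : V) (t : ℕ)
    (X B Cl : List V) (u v : V)
    (hp : IsSolution Adj col s t (X ++ u :: v :: (B ++ u :: v :: Cl))) :
    IsSolution Adj col s t (X ++ u :: (B.reverse ++ v :: Cl)) ∧
      walkWeight w (X ++ u :: (B.reverse ++ v :: Cl)) ≤
        walkWeight w (X ++ u :: v :: (B ++ u :: v :: Cl)) := by
  obtain ⟨⟨hne, hhead, hlast, hchain⟩, hcard⟩ := hp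
  -- chain decomposition
  change List.IsChain Adj _ at hchain; rw [List.isChain_append] at hchain
  obtain ⟨hcX, hc1, hlink1⟩ := hchain
  rw [List.isChain_cons_cons] at hc1
  obtain ⟨huv, hc2⟩ := hc1
  have hc2' : List.Chain' Adj ((v :: B) ++ u :: v :: Cl) := by simpa [List.Chain'] using hc2
  change List.IsChain Adj _ at hc2'; rw [List.isChain_append] at hc2'
  obtain ⟨hcvB, hc3, hlink2⟩ := hc2'
  rw [List.isChain_cons_cons] at hc3
  obtain ⟨huv2, hcvCl⟩ := hc3
  have hcvBu : List.Chain' Adj ((v :: B) ++ [u]) :=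
    hcvB.append (List.isChain_singleton u) (by simpa using hlink2)
  have hrev : List.Chain' Adj (u :: B.reverse ++ [v]) := by
    have h1 : List.Chain' (flip Adj) ((v :: B) ++ [u]) :=
      List.IsChain.imp (fun a b h => hsymm h) hcvBu
    have h2 := (List.isChain_reverse (R := Adj)).mpr h1
    simpa [List.Chain'] using h2
  have hlastmid : (u :: B.reverse ++ [v]).getLast? = some v := by
    rw [show u :: B.reverse ++ [v] = (u :: B.reverse) ++ v :: [] from rfl,
      List.getLast?_append_cons]; rfl
  have hmid : List.Chain' Adj ((u :: B.reverse ++ [v]) ++ Cl) := by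
    refine hrev.append (List.isChain_cons.mp hcvCl).2 ?_
    intro x hx y hy
    rw [hlastmid] at hx
    simp only [Option.mem_def, Option.some.injEq] at hx
    subst hx
    exact (List.isChain_cons.mp hcvCl).1 y hy
  have hchainNew : List.Chain' Adj (X ++ u :: (B.reverse ++ v :: Cl)) := by
    have he : X ++ u :: (B.reverse ++ v :: Cl) = X ++ ((u :: B.reverse ++ [v]) ++ Cl) := by simp
    rw [he]
    refine hcX.append hmid ?_
    intro x hx y hy
    simp only [List.cons_append, List.head?_cons, Option.mem_def, Option.some.injEq] at hy
    subst hy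
    have := hlink1 x hx u (by simp)
    exact this
  -- head
  have hh : (X ++ u :: (B.reverse ++ v :: Cl)).head? =
      (X ++ u :: v :: (B ++ u :: v :: Cl)).head? := by cases X <;> simp
  -- last
  have hl1 : (X ++ u :: v :: (B ++ u :: v :: Cl)).getLast? = (v :: Cl).getLast? := by
    rw [show X ++ u :: v :: (B ++ u :: v :: Cl) = (X ++ u :: v :: B ++ [u]) ++ v :: Cl by simp,
      List.getLast?_append_cons]
  have hl2 : (X ++ u :: (B.reverse ++ v :: Cl)).getLast? = (v :: Cl).getLast? := by
    rw [show X ++ u :: (B.reverse ++ v :: Cl) = (X ++ u :: B.reverse) ++ v :: Cl by simp,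
      List.getLast?_append_cons]
  -- collected
  have hcol : collected col (X ++ u :: (B.reverse ++ v :: Cl)) =
      collected col (X ++ u :: v :: (B ++ u :: v :: Cl)) := by
    ext x
    rw [mem_collected, mem_collected]
    constructor <;> rintro ⟨a, ha, hxa⟩ <;> refine ⟨a, ?_, hxa⟩ <;>
      simp only [List.mem_append, List.mem_cons, List.mem_reverse] at ha ⊢ <;> tauto
  -- weight
  have hwold : walkWeight w (X ++ u :: v :: (B ++ u :: v :: Cl)) =
      walkWeight w (X ++ [u]) + (w u v + (walkWeight w (v :: B ++ [u]) + (w u v + walkWeight w (v :: Cl)))) := by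
    rw [walkWeight_append_cons w u (v :: (B ++ u :: v :: Cl)) X]
    congr 1
    rw [show u :: v :: (B ++ u :: v :: Cl) = (u :: v :: B) ++ u :: v :: Cl by simp,
      walkWeight_append_cons w u (v :: Cl) (u :: v :: B)]
    simp only [walkWeight, List.cons_append, List.append_eq]
    ring
  have hwnew : walkWeight w (X ++ u :: (B.reverse ++ v :: Cl)) =
      walkWeight w (X ++ [u]) + (walkWeight w (v :: B ++ [u]) + walkWeight w (v :: Cl)) := by
    rw [walkWeight_append_cons w u (B.reverse ++ v :: Cl) X]
    congr 1
    rw [show u :: (B.reverse ++ v :: Cl) = (u :: B.reverse) ++ v :: Cl by simp,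
      walkWeight_append_cons w v Cl (u :: B.reverse)]
    have : (u :: B.reverse) ++ [v] = ((v :: B) ++ [u]).reverse := by simp
    rw [this, walkWeight_reverse w hwsymm]
  refine ⟨⟨⟨by simp, ?_, ?_, hchainNew⟩, ?_⟩, ?_⟩
  · rw [hh]; exact hhead
  · rw [hl2, ← hl1]; exact hlast
  · rw [hcol]; exact hcard
  · rw [hwold, hwnew]
    have := hw u v
    linarith

lemma surgeryB [DecidableEq C] {Adj : V → V → Prop}
    (w : V → V → ℝ) (hw : ∀ u v, 0 ≤ w u v)
    (col : V → Finset C) (s : V) (t : ℕ)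
    (X Cl : List V) (u : V)
    (hp : IsSolution Adj col s t (X ++ u :: u :: u :: Cl)) :
    IsSolution Adj col s t (X ++ u :: u :: Cl) ∧
      walkWeight w (X ++ u :: u :: Cl) ≤ walkWeight w (X ++ u :: u :: u :: Cl) := by
  obtain ⟨⟨hne, hhead, hlast, hchain⟩, hcard⟩ := hp
  change List.IsChain Adj _ at hchain; rw [List.isChain_append] at hchain
  obtain ⟨hcX, hc1, hlink1⟩ := hchain
  rw [List.isChain_cons_cons] at hc1
  have hchainNew : List.Chain' Adj (X ++ u :: u :: Cl) := by
    refine hcX.append hc1.2 ?_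
    intro x hx y hy
    simp only [List.head?_cons, Option.mem_def, Option.some.injEq] at hy
    subst hy
    exact hlink1 x hx u (by simp)
  have hh : (X ++ u :: u :: Cl).head? = (X ++ u :: u :: u :: Cl).head? := by cases X <;> simp
  have hl1 : (X ++ u :: u :: u :: Cl).getLast? = (u :: Cl).getLast? := by
    rw [show X ++ u :: u :: u :: Cl = (X ++ [u, u]) ++ u :: Cl by simp, List.getLast?_append_cons]
  have hl2 : (X ++ u :: u :: Cl).getLast? = (u :: Cl).getLast? := by
    rw [show X ++ u :: u :: Cl = (X ++ [u]) ++ u :: Cl by simp, List.getLast?_append_cons]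
  have hcol : collected col (X ++ u :: u :: Cl) = collected col (X ++ u :: u :: u :: Cl) := by
    ext x
    rw [mem_collected, mem_collected]
    constructor <;> rintro ⟨a, ha, hxa⟩ <;> refine ⟨a, ?_, hxa⟩ <;>
      simp only [List.mem_append, List.mem_cons] at ha ⊢ <;> tauto
  have hwold : walkWeight w (X ++ u :: u :: u :: Cl) =
      walkWeight w (X ++ [u]) + (w u u + (w u u + walkWeight w (u :: Cl))) := by
    rw [walkWeight_append_cons w u (u :: u :: Cl) X]
    simp only [walkWeight]
  have hwnew : walkWeight w (X ++ u :: u :: Cl) =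
      walkWeight w (X ++ [u]) + (w u u + walkWeight w (u :: Cl)) := by
    rw [walkWeight_append_cons w u (u :: Cl) X]
    simp only [walkWeight]
  refine ⟨⟨⟨by simp, ?_, ?_, hchainNew⟩, ?_⟩, ?_⟩
  · rw [hh]; exact hhead
  · rw [hl2, ← hl1]; exact hlast
  · rw [hcol]; exact hcard
  · rw [hwold, hwnew]
    have := hw u u
    linarith

end helpers

section decomp
variable {V : Type*}

lemma exists_decomp {p : List V} (h : ¬ (p.zip p.tail).Nodup) :
    (∃ X Cl u, p = X ++ u :: u :: u :: Cl) ∨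
    (∃ X B Cl u v, p = X ++ u :: v :: (B ++ u :: v :: Cl)) := by
  have key : ∃ i j, i < j ∧
      ∃ (hi : i < p.length) (hi1 : i+1 < p.length) (hj : j < p.length) (hL : j+1 < p.length),
      p[i]'hi = p[j]'hj ∧ p[i+1]'hi1 = p[j+1]'hL := by
    rw [List.nodup_iff_injective_get] at h
    obtain ⟨i', j', hget, hne⟩ := Function.not_injective_iff.mp h
    have hzlen : (p.zip p.tail).length = p.length - 1 := by
      simp [List.length_zip, List.length_tail]
    have hvne : (i' : ℕ) ≠ (j' : ℕ) := fun hv => hne (Fin.ext hv)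
    have extract : ∀ (a b : Fin (p.zip p.tail).length), (a:ℕ) < (b:ℕ) →
        (p.zip p.tail).get a = (p.zip p.tail).get b →
        ∃ i j, i < j ∧
          ∃ (hi : i < p.length) (hi1 : i+1 < p.length) (hj : j < p.length) (hL : j+1 < p.length),
          p[i]'hi = p[j]'hj ∧ p[i+1]'hi1 = p[j+1]'hL := by
      intro a b hab heq
      have hb2 := b.2
      have hb1 : (b:ℕ)+1 < p.length := by omega
      have ha : (a:ℕ) < p.length := by omega
      have ha1 : (a:ℕ)+1 < p.length := by omega
      have h1 : (p.zip p.tail).get a = (p[(a:ℕ)]'ha, p[(a:ℕ)+1]'ha1) := by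
        rw [List.get_eq_getElem, List.getElem_zip, List.getElem_tail]
      have h2 : (p.zip p.tail).get b = (p[(b:ℕ)]'(by omega), p[(b:ℕ)+1]'hb1) := by
        rw [List.get_eq_getElem, List.getElem_zip, List.getElem_tail]
      rw [h1, h2, Prod.mk.injEq] at heq
      exact ⟨a, b, hab, ha, ha1, by omega, hb1, heq.1, heq.2⟩
    rcases lt_or_gt_of_ne hvne with hlt | hlt
    · exact extract i' j' hlt hget
    · exact extract j' i' hlt hget.symm
  obtain ⟨i, j, hij, hi, hi1, hj, hL, hfst, hsnd⟩ := key
  rcases Nat.lt_or_ge (i+1) j with hcase | hcase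
  · -- j ≥ i+2 : general case
    right
    refine ⟨p.take i, (p.drop (i+2)).take (j-(i+2)), p.drop (j+2), p[i]'hi, p[i+1]'hi1, ?_⟩
    have e3 : p.drop j = p[i]'hi :: p[i+1]'hi1 :: p.drop (j+2) := by
      rw [List.drop_eq_getElem_cons hj, List.drop_eq_getElem_cons hL, ← hfst, ← hsnd]
    have e2 : p.drop (i+2) = (p.drop (i+2)).take (j-(i+2)) ++ (p[i]'hi :: p[i+1]'hi1 :: p.drop (j+2)) := by
      rw [← e3]
      conv_lhs => rw [← List.take_append_drop (j-(i+2)) (p.drop (i+2))]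
      rw [List.drop_drop]
      congr 2
      omega
    have e1 : p.drop i = p[i]'hi :: p[i+1]'hi1 :: p.drop (i+2) := by
      rw [List.drop_eq_getElem_cons hi, List.drop_eq_getElem_cons hi1]
    conv_lhs => rw [← List.take_append_drop i p, e1, e2]
  · -- j = i+1
    have hj' : j = i + 1 := by omega
    subst hj'
    left
    have hi2 : i + 2 < p.length := by omega
    refine ⟨p.take i, p.drop (i+3), p[i]'hi, ?_⟩
    have e1 : p.drop i = p[i]'hi :: p[i+1]'hi1 :: p[i+2]'hi2 :: p.drop (i+3) := by
      rw [List.drop_eq_getElem_cons hi, List.drop_eq_getElem_cons hi1,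
        List.drop_eq_getElem_cons hi2]
    have h1 : p[i+1]'hi1 = p[i]'hi := by rw [hfst]
    have h2 : p[i+2]'hi2 = p[i]'hi := by rw [hfst, ← hsnd]
    rw [h1, h2] at e1
    conv_lhs => rw [← List.take_append_drop i p, e1]

end decomp


lemma reduce {V C : Type*} [DecidableEq C] {Adj : V → V → Prop} (hsymm : Symmetric Adj)
    (w : V → V → ℝ) (hw : ∀ u v, 0 ≤ w u v) (hwsymm : ∀ u v, w u v = w v u)
    (col : V → Finset C) (s : V) (t : ℕ) :
    ∀ n (p : List V), p.length ≤ n → IsSolution Adj col s t p →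
      ∃ q, IsSolution Adj col s t q ∧ walkWeight w q ≤ walkWeight w p ∧
        (q.zip q.tail).Nodup := by
  intro n
  induction n with
  | zero =>
    intro p hlen hp
    exact absurd (List.length_eq_zero_iff.mp (Nat.le_zero.mp hlen)) hp.1.1
  | succ n ih =>
    intro p hlen hp
    by_cases hnd : (p.zip p.tail).Nodup
    · exact ⟨p, hp, le_refl _, hnd⟩
    rcases exists_decomp hnd with ⟨X, Cl, u, rfl⟩ | ⟨X, B, Cl, u, v, rfl⟩
    · obtain ⟨hp', hw'⟩ := surgeryB w hw col s t X Cl u hp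
      obtain ⟨q, hq, hwq, hndq⟩ := ih (X ++ u :: u :: Cl)
        (by simp only [List.length_append, List.length_cons] at hlen ⊢; omega) hp'
      exact ⟨q, hq, le_trans hwq hw', hndq⟩
    · obtain ⟨hp', hw'⟩ := surgeryA hsymm w hw hwsymm col s t X B Cl u v hp
      obtain ⟨q, hq, hwq, hndq⟩ := ih (X ++ u :: (B.reverse ++ v :: Cl))
        (by simp only [List.length_append, List.length_cons, List.length_reverse] at hlen ⊢
            omega) hp'
      exact ⟨q, hq, le_trans hwq hw', hndq⟩


/-- any feasible Graph Inspection instance admits an optimal solution walk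
repeating no directed edge. -/
theorem stmt0 {V C : Type*} [Fintype V] [DecidableEq C]
    (Adj : V → V → Prop) (hsymm : Symmetric Adj)
    (w : V → V → ℝ) (hw : ∀ u v, 0 ≤ w u v) (hwsymm : ∀ u v, w u v = w v u)
    (col : V → Finset C) (s : V) (t : ℕ)
    (hfeas : ∃ p, IsSolution Adj col s t p) :
    ∃ p, IsSolution Adj col s t p ∧
      (∀ q, IsSolution Adj col s t q → walkWeight w p ≤ walkWeight w q) ∧
      (p.zip p.tail).Nodup := by
  classical
  obtain ⟨p0, hp0⟩ := hfeas
  obtain ⟨q0, hq0, _, hnd0⟩ := reduce hsymm w hw hwsymm col s t p0.length p0 le_rfl hp0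
  set S : Set (List V) := {p | IsSolution Adj col s t p ∧ (p.zip p.tail).Nodup} with hS
  have hSfin : S.Finite := by
    apply Set.Finite.subset (List.finite_length_le V (Fintype.card (V × V) + 1))
    intro p hp
    have h1 : (p.zip p.tail).length ≤ Fintype.card (V × V) := hp.2.length_le_card
    have h2 : (p.zip p.tail).length = min p.length (p.length - 1) := by
      simp [List.length_zip, List.length_tail]
    simp only [Set.mem_setOf_eq]
    omega
  have hSne : S.Nonempty := ⟨q0, hq0, hnd0⟩
  obtain ⟨p, hpS, hmin⟩ := Set.exists_min_image S (walkWeight w) hSfin hSne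
  refine ⟨p, hpS.1, ?_, hpS.2⟩
  intro q hq
  obtain ⟨q', hq', hwq', hnd'⟩ := reduce hsymm w hw hwsymm col s t q.length q le_rfl hq
  exact le_trans (hmin q' ⟨hq', hnd'⟩) hwq'
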